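/- arXiv:2107.03687 — 6 statements merged into one kernel-verified Lean document; each statement's English description precedes it below -/
import Mathlib

section
/- Dominated Convergence for non-measurable functions: if (h_n)_{n∈ℕ} is a sequence of arbitrary functions Σ → [0,∞] converging pointwise ρ-almost everywhere to 0, and the upper integral of sup_n h_n is finite, then the lower integral of h_n converges to 0 as n → ∞. -/
open MeasureTheory ENNReal Filter
open scoped ENNReal NNReal Topology

noncomputable section

/-- The upper integral of an arbitrary (not necessarily measurable) function. -/
def upperIntegral {Ω : Type*} [MeasurableSpace Ω] (ρ : Measure Ω) (h : Ω → ℝ≥0∞) : ℝ≥0∞ :=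
  ⨅ (g : Ω → ℝ≥0∞) (_ : Measurable g) (_ : ∀ᵐ ω ∂ρ, h ω ≤ g ω), ∫⁻ ω, g ω ∂ρ

/-- The lower integral of an arbitrary function. -/
def lowerIntegral {Ω : Type*} [MeasurableSpace Ω] (ρ : Measure Ω) (h : Ω → ℝ≥0∞) : ℝ≥0∞ :=
  ⨆ (g : Ω → ℝ≥0∞) (_ : Measurable g) (_ : ∀ᵐ ω ∂ρ, g ω ≤ h ω), ∫⁻ ω, g ω ∂ρ

/-- dominated convergence for (possibly non-measurable) nonnegative
functions: if `h_n → 0` pointwise ρ-a.e. and the upper integral of `sup_n h_n` is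
finite, then the lower integrals of `h_n` tend to `0`. -/
theorem lowerIntegral_tendsto_zero_of_dominated
    {S : Type*} [MeasurableSpace S] (ρ : Measure S)
    (h : ℕ → S → ℝ≥0∞)
    (hconv : ∀ᵐ σ ∂ρ, Tendsto (fun n => h n σ) atTop (𝓝 0))
    (hdom : upperIntegral ρ (fun σ => ⨆ n, h n σ) < ∞) :
    Tendsto (fun n => lowerIntegral ρ (h n)) atTop (𝓝 0) := by
  obtain ⟨g, hg, hge, hgint⟩ :
      ∃ g, Measurable g ∧ (∀ᵐ σ ∂ρ, (⨆ n, h n σ) ≤ g σ) ∧ ∫⁻ σ, g σ ∂ρ < ∞ := by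
    rw [upperIntegral] at hdom
    simp only [iInf_lt_iff] at hdom
    obtain ⟨g, hg, hge, hlt⟩ := hdom
    exact ⟨g, hg, hge, hlt⟩
  -- each lower integral is at most ∫ g, hence finite
  have hle_g : ∀ n, lowerIntegral ρ (h n) ≤ ∫⁻ σ, g σ ∂ρ := by
    intro n
    rw [lowerIntegral]
    refine iSup_le fun f => iSup_le fun hf => iSup_le fun hfh => ?_
    refine lintegral_mono_ae ?_
    filter_upwards [hfh, hge] with σ h1 h2
    exact h1.trans ((le_iSup (fun m => h m σ) n).trans h2)
  have hfin : ∀ n, lowerIntegral ρ (h n) ≠ ∞ := fun n =>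
    ((hle_g n).trans_lt hgint).ne
  -- choose near-optimal measurable minorants
  have key : ∀ n, ∃ f : S → ℝ≥0∞, Measurable f ∧ (∀ᵐ σ ∂ρ, f σ ≤ h n σ) ∧
      lowerIntegral ρ (h n) ≤ ∫⁻ σ, f σ ∂ρ + (2 : ℝ≥0∞)⁻¹ ^ n := by
    intro n
    by_cases hF : lowerIntegral ρ (h n) ≤ (2 : ℝ≥0∞)⁻¹ ^ n
    · refine ⟨fun _ => 0, measurable_const, Filter.Eventually.of_forall fun σ => zero_le, ?_⟩
      simpa using hF
    · push_neg at hF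
      have hsub : lowerIntegral ρ (h n) - (2 : ℝ≥0∞)⁻¹ ^ n < lowerIntegral ρ (h n) := by
        refine ENNReal.sub_lt_self (hfin n) ?_ ?_
        · exact (pos_of_gt hF).ne'
        · exact pow_ne_zero n (by simp)
      rw [lowerIntegral] at hsub
      simp only [lt_iSup_iff] at hsub
      obtain ⟨f, hf, hfh, hlt⟩ := hsub
      refine ⟨f, hf, hfh, ?_⟩
      have := tsub_add_cancel_of_le hF.le
      calc lowerIntegral ρ (h n)
          = lowerIntegral ρ (h n) - (2 : ℝ≥0∞)⁻¹ ^ n + (2 : ℝ≥0∞)⁻¹ ^ n := this.symm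
        _ ≤ ∫⁻ σ, f σ ∂ρ + (2 : ℝ≥0∞)⁻¹ ^ n := add_le_add hlt.le le_rfl
  choose f hf hfh hfge using key
  -- f n → 0 a.e., dominated by g
  have hfg : ∀ n, ∀ᵐ σ ∂ρ, f n σ ≤ g σ := by
    intro n
    filter_upwards [hfh n, hge] with σ h1 h2
    exact h1.trans ((le_iSup (fun m => h m σ) n).trans h2)
  have hf0 : ∀ᵐ σ ∂ρ, Tendsto (fun n => f n σ) atTop (𝓝 0) := by
    have hall : ∀ᵐ σ ∂ρ, ∀ n, f n σ ≤ h n σ := ae_all_iff.mpr hfh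
    filter_upwards [hconv, hall] with σ hc ha
    exact tendsto_of_tendsto_of_tendsto_of_le_of_le tendsto_const_nhds hc
      (fun n => zero_le) ha
  have hDCT : Tendsto (fun n => ∫⁻ σ, f n σ ∂ρ) atTop (𝓝 0) := by
    have := tendsto_lintegral_of_dominated_convergence g hf hfg hgint.ne hf0
    simpa using this
  -- squeeze
  have hbound : Tendsto (fun n => ∫⁻ σ, f n σ ∂ρ + (2 : ℝ≥0∞)⁻¹ ^ n) atTop (𝓝 0) := by
    have h2 : Tendsto (fun n : ℕ => ((2 : ℝ≥0∞)⁻¹) ^ n) atTop (𝓝 0) :=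
      ENNReal.tendsto_pow_atTop_nhds_zero_of_lt_one (by
        rw [ENNReal.inv_lt_one]; exact one_lt_two)
    simpa using hDCT.add h2
  exact tendsto_of_tendsto_of_tendsto_of_le_of_le tendsto_const_nhds hbound
    (fun n => zero_le) hfge

end
end

section
/- If (Σ_n, ℋ_n, ρ_n)_{n∈ℕ} is a sequence of measure spaces and (Σ, ℋ, ρ) is their disjoint union, then for an arbitrary function h : Σ → [0,∞], the lower integral of h over Σ equals the sum over n of the lower integrals of h restricted to Σ_n, and similarly for the upper integral. -/
open MeasureTheory ENNReal
open scoped ENNReal NNReal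

noncomputable section

section Aux

variable {Ω : ℕ → Type*} [∀ n, MeasurableSpace (Ω n)]

lemma aux_measurableSet_sigma_iff {t : Set ((n : ℕ) × Ω n)} :
    MeasurableSet t ↔ ∀ n, MeasurableSet (Sigma.mk n ⁻¹' t) :=
  MeasurableSpace.measurableSet_iInf

lemma aux_measurable_sigmaMk (n : ℕ) :
    Measurable (Sigma.mk n : Ω n → (k : ℕ) × Ω k) := by
  intro t ht
  exact (aux_measurableSet_sigma_iff.1 ht) n

lemma aux_measurable_sigma {β : Type*} [MeasurableSpace β] {G : ((n : ℕ) × Ω n) → β}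
    (hG : ∀ n, Measurable fun x => G ⟨n, x⟩) : Measurable G := by
  intro s hs
  exact aux_measurableSet_sigma_iff.2 fun n => hG n hs

lemma aux_measurableEmbedding_sigmaMk (n : ℕ) :
    MeasurableEmbedding (Sigma.mk n : Ω n → (k : ℕ) × Ω k) where
  injective := sigma_mk_injective
  measurable := aux_measurable_sigmaMk n
  measurableSet_image' := by
    intro s hs
    refine aux_measurableSet_sigma_iff.2 fun a => ?_
    rcases eq_or_ne a n with rfl | hne
    · simpa [Set.preimage_image_eq _ sigma_mk_injective] using hs
    · have : (Sigma.mk a : Ω a → (k : ℕ) × Ω k) ⁻¹' (Sigma.mk n '' s) = ∅ := by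
        ext x
        simp only [Set.mem_preimage, Set.mem_image, Set.mem_empty_iff_false, iff_false]
        rintro ⟨y, _, hy⟩
        exact hne (congrArg Sigma.fst hy).symm
      rw [this]
      exact MeasurableSet.empty

lemma aux_ae_map_sigmaMk_iff (n : ℕ) (ρ : Measure (Ω n)) {p : ((k : ℕ) × Ω k) → Prop} :
    (∀ᵐ y ∂ρ.map (Sigma.mk n), p y) ↔ ∀ᵐ x ∂ρ, p ⟨n, x⟩ := by
  rw [Filter.eventually_iff, mem_ae_iff, (aux_measurableEmbedding_sigmaMk n).map_apply,
    Filter.eventually_iff, mem_ae_iff]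
  rfl

end Aux

section Attained

variable {Ω' : Type*} [MeasurableSpace Ω'] (ρ : Measure Ω') (h : Ω' → ℝ≥0∞)

lemma lowerIntegral_eq_iSup :
    lowerIntegral ρ h
      = ⨆ g : {g : Ω' → ℝ≥0∞ // Measurable g ∧ ∀ᵐ ω ∂ρ, g ω ≤ h ω}, ∫⁻ ω, g.1 ω ∂ρ := by
  refine le_antisymm ?_ ?_
  · exact iSup_le fun g => iSup_le fun hg => iSup_le fun hgh =>
      le_iSup (fun g : {g : Ω' → ℝ≥0∞ // Measurable g ∧ ∀ᵐ ω ∂ρ, g ω ≤ h ω} =>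
        ∫⁻ ω, g.1 ω ∂ρ) ⟨g, hg, hgh⟩
  · exact iSup_le fun g =>
      le_iSup_of_le g.1 <| le_iSup_of_le g.2.1 <| le_iSup_of_le g.2.2 le_rfl

lemma upperIntegral_eq_iInf :
    upperIntegral ρ h
      = ⨅ g : {g : Ω' → ℝ≥0∞ // Measurable g ∧ ∀ᵐ ω ∂ρ, h ω ≤ g ω}, ∫⁻ ω, g.1 ω ∂ρ := by
  refine le_antisymm ?_ ?_
  · exact le_iInf fun g =>
      iInf_le_of_le g.1 <| iInf_le_of_le g.2.1 <| iInf_le_of_le g.2.2 le_rfl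
  · exact le_iInf fun g => le_iInf fun hg => le_iInf fun hgh =>
      iInf_le (fun g : {g : Ω' → ℝ≥0∞ // Measurable g ∧ ∀ᵐ ω ∂ρ, h ω ≤ g ω} =>
        ∫⁻ ω, g.1 ω ∂ρ) ⟨g, hg, hgh⟩

lemma exists_lowerIntegral_attained :
    ∃ g : Ω' → ℝ≥0∞, Measurable g ∧ (∀ᵐ ω ∂ρ, g ω ≤ h ω) ∧
      ∫⁻ ω, g ω ∂ρ = lowerIntegral ρ h := by
  set K := {g : Ω' → ℝ≥0∞ // Measurable g ∧ ∀ᵐ ω ∂ρ, g ω ≤ h ω} with hK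
  have hKne : Nonempty K := ⟨⟨fun _ => 0, measurable_const, .of_forall fun _ => zero_le⟩⟩
  set V : K → ℝ≥0∞ := fun g => ∫⁻ ω, g.1 ω ∂ρ with hV
  have hLI : lowerIntegral ρ h = sSup (Set.range V) := by
    rw [lowerIntegral_eq_iSup ρ h, sSup_range]
  obtain ⟨u, hu_mono, hu_tendsto, hu_mem⟩ :=
    exists_seq_tendsto_sSup (Set.range_nonempty V) (OrderTop.bddAbove _)
  choose c hc using hu_mem
  refine ⟨fun ω => ⨆ k, (c k).1 ω, .iSup fun k => (c k).2.1,
    (MeasureTheory.ae_all_iff.2 fun k => (c k).2.2).mono fun ω hω => iSup_le hω, ?_⟩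
  have hsup_u : (⨆ k, u k) = sSup (Set.range V) :=
    tendsto_nhds_unique (tendsto_atTop_iSup hu_mono) hu_tendsto
  refine le_antisymm ?_ ?_
  · rw [lowerIntegral_eq_iSup ρ h]
    exact le_iSup_of_le ⟨fun ω => ⨆ k, (c k).1 ω, .iSup fun k => (c k).2.1,
      (MeasureTheory.ae_all_iff.2 fun k => (c k).2.2).mono fun ω hω => iSup_le hω⟩ le_rfl
  · rw [hLI, ← hsup_u]
    refine iSup_le fun k => ?_
    rw [← hc k]
    exact lintegral_mono fun ω => le_iSup (fun k => (c k).1 ω) k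

lemma exists_upperIntegral_attained :
    ∃ g : Ω' → ℝ≥0∞, Measurable g ∧ (∀ᵐ ω ∂ρ, h ω ≤ g ω) ∧
      ∫⁻ ω, g ω ∂ρ = upperIntegral ρ h := by
  set K := {g : Ω' → ℝ≥0∞ // Measurable g ∧ ∀ᵐ ω ∂ρ, h ω ≤ g ω} with hK
  have hKne : Nonempty K := ⟨⟨fun _ => ⊤, measurable_const, .of_forall fun _ => le_top⟩⟩
  set V : K → ℝ≥0∞ := fun g => ∫⁻ ω, g.1 ω ∂ρ with hV
  have hUI : upperIntegral ρ h = sInf (Set.range V) := by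
    rw [upperIntegral_eq_iInf ρ h, sInf_range]
  obtain ⟨u, hu_anti, hu_tendsto, hu_mem⟩ :=
    exists_seq_tendsto_sInf (Set.range_nonempty V) (OrderBot.bddBelow _)
  choose c hc using hu_mem
  refine ⟨fun ω => ⨅ k, (c k).1 ω, .iInf fun k => (c k).2.1,
    (MeasureTheory.ae_all_iff.2 fun k => (c k).2.2).mono fun ω hω => le_iInf hω, ?_⟩
  have hinf_u : (⨅ k, u k) = sInf (Set.range V) :=
    tendsto_nhds_unique (tendsto_atTop_iInf hu_anti) hu_tendsto
  refine le_antisymm ?_ ?_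
  · rw [hUI, ← hinf_u]
    refine le_iInf fun k => ?_
    rw [← hc k]
    exact lintegral_mono fun ω => iInf_le (fun k => (c k).1 ω) k
  · rw [upperIntegral_eq_iInf ρ h]
    exact iInf_le_of_le ⟨fun ω => ⨅ k, (c k).1 ω, .iInf fun k => (c k).2.1,
      (MeasureTheory.ae_all_iff.2 fun k => (c k).2.2).mono fun ω hω => le_iInf hω⟩ le_rfl

end Attained

/-- upper and lower integrals over a countable disjoint union of
measure spaces decompose as sums. The disjoint union of `(Σ_n, ℋ_n, ρ_n)` is
modelled as the sigma type `(n : ℕ) × Ω n` with the measure `∑_n (ρ_n ∘ (Sigma.mk n)⁻¹)`. -/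
theorem lowerIntegral_upperIntegral_sigma
    {Ω : ℕ → Type*} [∀ n, MeasurableSpace (Ω n)] (ρ : ∀ n, Measure (Ω n))
    (h : ((n : ℕ) × Ω n) → ℝ≥0∞) :
    lowerIntegral (Measure.sum (fun n => (ρ n).map (Sigma.mk n))) h
        = ∑' n, lowerIntegral (ρ n) (fun x => h ⟨n, x⟩) ∧
      upperIntegral (Measure.sum (fun n => (ρ n).map (Sigma.mk n))) h
        = ∑' n, upperIntegral (ρ n) (fun x => h ⟨n, x⟩) := by
  set μ := Measure.sum (fun n => (ρ n).map (Sigma.mk n)) with hμ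
  -- decomposition of the integral of a measurable function on the sigma type
  have key : ∀ g : ((n : ℕ) × Ω n) → ℝ≥0∞,
      ∫⁻ ω, g ω ∂μ = ∑' n, ∫⁻ x, g ⟨n, x⟩ ∂ρ n := by
    intro g
    rw [hμ, lintegral_sum_measure]
    exact tsum_congr fun n => (aux_measurableEmbedding_sigmaMk n).lintegral_map g
  have ae_iff' : ∀ p : ((n : ℕ) × Ω n) → Prop,
      (∀ᵐ ω ∂μ, p ω) ↔ ∀ n, ∀ᵐ x ∂ρ n, p ⟨n, x⟩ := by
    intro p
    rw [hμ, MeasureTheory.Measure.ae_sum_iff]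
    exact forall_congr' fun n => aux_ae_map_sigmaMk_iff n (ρ n)
  constructor
  · refine le_antisymm ?_ ?_
    · refine iSup_le fun g => iSup_le fun hg => iSup_le fun hgh => ?_
      rw [key g]
      refine ENNReal.tsum_le_tsum fun n => ?_
      refine le_iSup_of_le (fun x => g ⟨n, x⟩) <|
        le_iSup_of_le (hg.comp (aux_measurable_sigmaMk n)) <|
        le_iSup_of_le ((ae_iff' _).1 hgh n) le_rfl
    · choose g hgm hgle hgint using fun n =>
        exists_lowerIntegral_attained (ρ n) (fun x => h ⟨n, x⟩)
      calc ∑' n, lowerIntegral (ρ n) (fun x => h ⟨n, x⟩)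
          = ∑' n, ∫⁻ x, g n x ∂ρ n := by
            exact (tsum_congr fun n => (hgint n).symm)
        _ = ∫⁻ ω, g ω.1 ω.2 ∂μ := (key fun ω => g ω.1 ω.2).symm
        _ ≤ lowerIntegral μ h := by
            refine le_iSup_of_le (fun ω => g ω.1 ω.2) <|
              le_iSup_of_le (aux_measurable_sigma fun n => hgm n) <|
              le_iSup_of_le ((ae_iff' _).2 fun n => hgle n) le_rfl
  · refine le_antisymm ?_ ?_
    · choose g hgm hgle hgint using fun n =>
        exists_upperIntegral_attained (ρ n) (fun x => h ⟨n, x⟩)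
      calc upperIntegral μ h
          ≤ ∫⁻ ω, g ω.1 ω.2 ∂μ := by
            refine iInf_le_of_le (fun ω => g ω.1 ω.2) <|
              iInf_le_of_le (aux_measurable_sigma fun n => hgm n) <|
              iInf_le_of_le ((ae_iff' _).2 fun n => hgle n) le_rfl
        _ = ∑' n, ∫⁻ x, g n x ∂ρ n := key fun ω => g ω.1 ω.2
        _ = ∑' n, upperIntegral (ρ n) (fun x => h ⟨n, x⟩) := tsum_congr fun n => hgint n
    · refine le_iInf fun g => le_iInf fun hg => le_iInf fun hgh => ?_
      rw [key g]
      refine ENNReal.tsum_le_tsum fun n => ?_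
      refine iInf_le_of_le (fun x => g ⟨n, x⟩) <|
        iInf_le_of_le (hg.comp (aux_measurable_sigmaMk n)) <|
        iInf_le_of_le ((ae_iff' _).1 hgh n) le_rfl


end
end

section
/- Triangle inequality for Gel'fand–Pettis integrals: if V is a Hausdorff locally convex topological vector space, f : Σ → V is weakly (Gel'fand–Pettis) integrable with respect to a measure ρ, and α is a continuous seminorm on V, then α(∫_Σ f dρ) ≤ ∫̲_Σ α(f(σ)) ρ(dσ), where the right-hand side is the lower integral (since α∘f need not be measurable). -/
open MeasureTheory ENNReal
open scoped ENNReal NNReal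

noncomputable section

/-- triangle inequality for Gel'fand–Pettis integrals in a Hausdorff
locally convex topological vector space `V`: if `f` is weakly integrable, `I` is its
weak integral over `Σ`, and `α` is a continuous seminorm on `V`, then
`α(I) ≤ ∫̲ α(f(σ)) ρ(dσ)` (a lower integral, since `α ∘ f` need not be measurable). -/
theorem seminorm_weakIntegral_le_lowerIntegral
    {S : Type*} [MeasurableSpace S] (ρ : Measure S)
    {V : Type*} [AddCommGroup V] [Module ℂ V] [TopologicalSpace V]
    [IsTopologicalAddGroup V] [ContinuousSMul ℂ V] [T2Space V]
    [Module ℝ V] [IsScalarTower ℝ ℂ V] [LocallyConvexSpace ℝ V]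
    (f : S → V)
    (hmeas : ∀ ℓ : V →L[ℂ] ℂ, Measurable fun σ => ℓ (f σ))
    (hint : ∀ ℓ : V →L[ℂ] ℂ, Integrable (fun σ => ℓ (f σ)) ρ)
    (hwint : ∀ T : Set S, MeasurableSet T →
      ∃ v : V, ∀ ℓ : V →L[ℂ] ℂ, ℓ v = ∫ σ in T, ℓ (f σ) ∂ρ)
    (I : V) (hI : ∀ ℓ : V →L[ℂ] ℂ, ℓ I = ∫ σ, ℓ (f σ) ∂ρ)
    (α : Seminorm ℂ V) (hα : Continuous α) :
    ENNReal.ofReal (α I) ≤ lowerIntegral ρ (fun σ => ENNReal.ofReal (α (f σ))) := by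
  classical
  -- Real Hahn–Banach: extend `t • I ↦ t * α I` to `g : V →ₗ[ℝ] ℝ` dominated by `α`.
  have hH : ∀ c : ℝ, c • I = (0 : V) → c • (α I) = 0 := by
    intro c hc
    have h1 : α ((c : ℂ) • I) = 0 := by
      rw [show ((c : ℂ) • I) = c • I from algebraMap_smul ℂ c I, hc, map_zero]
    rw [map_smul_eq_mul] at h1
    rcases mul_eq_zero.1 h1 with h | h
    · simp at h; simp [h]
    · simp [h]
  obtain ⟨g, hg_ext, hg_le⟩ := exists_extension_of_le_sublinear
    (LinearPMap.mkSpanSingleton' I (α I) hH) (fun x => α x)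
    (by
      intro c hc x
      show α (c • x) = c * α x
      rw [show (c • x : V) = (c : ℂ) • x from (algebraMap_smul ℂ c x).symm,
        map_smul_eq_mul]
      simp [abs_of_pos hc])
    (fun x y => map_add_le_add α x y)
    (by
      rintro ⟨x, hx⟩
      rw [LinearPMap.domain_mkSpanSingleton, Submodule.mem_span_singleton] at hx
      obtain ⟨c, rfl⟩ := hx
      rw [LinearPMap.mkSpanSingleton'_apply]
      show c • α I ≤ α (c • I)
      have : α (c • I) = |c| * α I := by
        rw [show (c • I : V) = (c : ℂ) • I from (algebraMap_smul ℂ c I).symm,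
          map_smul_eq_mul]
        simp
      rw [this]
      calc c • α I = c * α I := rfl
        _ ≤ |c| * α I := mul_le_mul_of_nonneg_right (le_abs_self c) (apply_nonneg α I))
  have hgI : g I = α I := by
    have hmem : I ∈ (LinearPMap.mkSpanSingleton' I (α I) hH : V →ₗ.[ℝ] ℝ).domain := by
      rw [LinearPMap.domain_mkSpanSingleton]
      exact Submodule.mem_span_singleton_self I
    have := hg_ext ⟨I, hmem⟩
    rwa [LinearPMap.mkSpanSingleton'_apply_self] at this
  have habs : ∀ x, |g x| ≤ α x := by
    intro x
    rw [abs_le]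
    refine ⟨?_, hg_le x⟩
    have := hg_le (-x)
    rw [map_neg, map_neg_eq_map α x] at this
    linarith
  -- `g` is continuous.
  have hgc : Continuous g := by
    rw [continuous_iff_continuousAt]
    intro x
    have h0 : Filter.Tendsto (fun y => α (y - x)) (nhds x) (nhds 0) := by
      have hc : Continuous fun y : V => α (y - x) :=
        hα.comp ((continuous_id (X := V)).sub (continuous_const (y := x)))
      have := hc.tendsto x
      simpa using this
    have h1 : Filter.Tendsto (fun y => g y - g x) (nhds x) (nhds 0) := by
      refine squeeze_zero_norm (fun y => ?_) h0
      rw [Real.norm_eq_abs, ← map_sub]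
      exact habs _
    have := h1.add_const (g x)
    have h2 : Filter.Tendsto (fun x => g x) (nhds x) (nhds (g x)) := by simpa using this
    exact h2
  -- Complexify.
  set L : V →ₗ[ℂ] ℂ := g.extendTo𝕜'
  have hLapp : ∀ x, L x = (g x : ℂ) - (RCLike.I : ℂ) * (g ((RCLike.I : ℂ) • x) : ℂ) :=
    fun x => LinearMap.extendTo𝕜'_apply (𝕜 := ℂ) g x
  have hLre : ∀ x, RCLike.re (L x) = g x := fun x => LinearMap.extendTo𝕜'_apply_re (𝕜 := ℂ) g x
  have hLbound : ∀ x, ‖L x‖ ≤ α x := by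
    intro x
    have hsq : ‖L x‖ ^ 2 = g ((starRingEnd ℂ) (L x) • x) :=
      LinearMap.norm_extendTo𝕜'_apply_sq (𝕜 := ℂ) g x
    have h2 : ‖L x‖ ^ 2 ≤ ‖L x‖ * α x := by
      rw [hsq]
      calc g ((starRingEnd ℂ) (L x) • x) ≤ α ((starRingEnd ℂ) (L x) • x) := hg_le _
        _ = ‖(starRingEnd ℂ) (L x)‖ * α x := map_smul_eq_mul α _ x
        _ = ‖L x‖ * α x := by rw [RCLike.norm_conj]
    rcases eq_or_lt_of_le (norm_nonneg (L x)) with h | h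
    · rw [← h]; exact apply_nonneg α x
    · rw [sq] at h2
      exact le_of_mul_le_mul_left h2 h
  have hLc : Continuous L := by
    have : (L : V → ℂ) = fun x => (g x : ℂ) - (RCLike.I : ℂ) * (g ((RCLike.I : ℂ) • x) : ℂ) :=
      funext hLapp
    rw [this]
    fun_prop
  set Lc : V →L[ℂ] ℂ := ⟨L, hLc⟩
  -- Main estimate.
  have key : α I ≤ ∫ σ, ‖Lc (f σ)‖ ∂ρ := by
    have h1 : α I = RCLike.re (Lc I) := by rw [show Lc I = L I from rfl, hLre, hgI]
    calc α I = RCLike.re (Lc I) := h1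
      _ ≤ ‖Lc I‖ := RCLike.re_le_norm _
      _ = ‖∫ σ, Lc (f σ) ∂ρ‖ := by rw [hI Lc]
      _ ≤ ∫ σ, ‖Lc (f σ)‖ ∂ρ := norm_integral_le_integral_norm _
  have hof : ENNReal.ofReal (∫ σ, ‖Lc (f σ)‖ ∂ρ)
      = ∫⁻ σ, ENNReal.ofReal ‖Lc (f σ)‖ ∂ρ := by
    rw [MeasureTheory.ofReal_integral_norm_eq_lintegral_enorm (hint Lc)]
    simp_rw [ofReal_norm]
  have hle : ENNReal.ofReal (α I) ≤ ∫⁻ σ, ENNReal.ofReal ‖Lc (f σ)‖ ∂ρ := by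
    rw [← hof]
    exact ENNReal.ofReal_le_ofReal key
  refine hle.trans ?_
  unfold lowerIntegral
  refine le_iSup_of_le (fun σ => ENNReal.ofReal ‖Lc (f σ)‖) ?_
  refine le_iSup_of_le ((hmeas Lc).norm.ennreal_ofReal) ?_
  refine le_iSup_of_le (Filter.Eventually.of_forall fun σ =>
    ENNReal.ofReal_le_ofReal (hLbound (f σ))) le_rfl


end
end

section
/- Dominated convergence for weak integrals: let V be a sequentially complete Hausdorff locally convex space whose topology is generated by a family 𝒮 of seminorms. If (f_n) is a sequence of weakly integrable maps Σ → V converging pointwise to f : Σ → V, and for every α ∈ 𝒮 the upper integral of sup_n α(f_n) is finite, then f is weakly integrable and ∫_Σ f_n dρ → ∫_Σ f dρ in V. -/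
open MeasureTheory ENNReal Filter
open scoped ENNReal NNReal Topology

noncomputable section

/-- `f : S → V` is weakly (Gel'fand–Pettis) integrable: every `ℓ ∘ f` with
`ℓ` in the continuous dual is measurable and integrable, and over every measurable
set there is a vector representing the integrals of the `ℓ ∘ f`. -/
def WeaklyIntegrable {S : Type*} [MeasurableSpace S] (ρ : Measure S)
    {V : Type*} [AddCommGroup V] [Module ℂ V] [TopologicalSpace V] (f : S → V) : Prop :=
  (∀ ℓ : V →L[ℂ] ℂ, Measurable fun σ => ℓ (f σ)) ∧
  (∀ ℓ : V →L[ℂ] ℂ, Integrable (fun σ => ℓ (f σ)) ρ) ∧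
  ∀ T : Set S, MeasurableSet T →
    ∃ v : V, ∀ ℓ : V →L[ℂ] ℂ, ℓ v = ∫ σ in T, ℓ (f σ) ∂ρ

theorem exists_dual_seminorm {V : Type*} [AddCommGroup V] [Module ℂ V]
    (q : Seminorm ℂ V) (v : V) :
    ∃ ℓ : V →ₗ[ℂ] ℂ, (∀ x, ‖ℓ x‖ ≤ q x) ∧ q v ≤ ‖ℓ v‖ := by
  by_cases hv : v = 0
  · subst hv
    exact ⟨0, fun x => by simpa using apply_nonneg q x, by simp⟩
  have H : ∀ c : ℝ, c • v = 0 → c • q v = 0 := by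
    intro c hc
    rcases eq_or_ne c 0 with rfl | hc0
    · simp
    · exact absurd (by rw [← one_smul ℝ v, ← inv_mul_cancel₀ hc0, mul_smul, hc, smul_zero]) hv
  have hreal : ∀ (c : ℝ) (x : V), q (c • x) = |c| * q x := by
    intro c x
    rw [← algebraMap_smul ℂ c x, map_smul_eq_mul]
    norm_num
  set f : V →ₗ.[ℝ] ℝ := LinearPMap.mkSpanSingleton' v (q v) H with hfdef
  obtain ⟨g, hg_eq, hg_le⟩ := exists_extension_of_le_sublinear f q
    (fun c hc x => by rw [hreal, abs_of_pos hc])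
    (fun x y => map_add_le_add q x y)
    (by
      rintro ⟨x, hx⟩
      have hx' : x ∈ Submodule.span ℝ {v} := by
        rwa [hfdef, LinearPMap.domain_mkSpanSingleton] at hx
      obtain ⟨c, rfl⟩ := Submodule.mem_span_singleton.1 hx'
      have hfx : f ⟨c • v, hx⟩ = c • q v := LinearPMap.mkSpanSingleton'_apply v (q v) H c hx
      rw [hfx, smul_eq_mul]
      calc c * q v ≤ |c| * q v :=
            mul_le_mul_of_nonneg_right (le_abs_self c) (apply_nonneg q v)
        _ = q (c • v) := (hreal c v).symm)
  refine ⟨g.extendTo𝕜', fun x => ?_, ?_⟩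
  · by_cases h0 : g.extendTo𝕜' x = (0 : ℂ)
    · rw [h0]; simpa using apply_nonneg q x
    · have hsq := g.norm_extendTo𝕜'_apply_sq (𝕜 := ℂ) x
      have h1 : ‖(g.extendTo𝕜' x : ℂ)‖ ^ 2 ≤ ‖(g.extendTo𝕜' x : ℂ)‖ * q x := by
        erw [hsq]
        calc g ((starRingEnd ℂ) (g.extendTo𝕜' x) • x)
            ≤ q ((starRingEnd ℂ) (g.extendTo𝕜' x) • x) := hg_le _
          _ = ‖(starRingEnd ℂ) (g.extendTo𝕜' x)‖ * q x := map_smul_eq_mul q _ x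
          _ = ‖(g.extendTo𝕜' x : ℂ)‖ * q x := by rw [RCLike.norm_conj]
      have hpos : 0 < ‖(g.extendTo𝕜' x : ℂ)‖ := norm_pos_iff.2 h0
      rw [pow_two] at h1
      exact le_of_mul_le_mul_left h1 hpos
  · have hv_mem : v ∈ f.domain := by
      rw [hfdef, LinearPMap.domain_mkSpanSingleton]
      exact Submodule.mem_span_singleton_self v
    have h1 : g v = q v := by
      have h2 := hg_eq ⟨v, hv_mem⟩
      rwa [LinearPMap.mkSpanSingleton'_apply_self] at h2
    calc q v = RCLike.re (g.extendTo𝕜' v : ℂ) := by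
          erw [LinearMap.extendTo𝕜'_apply_re, h1]
      _ ≤ ‖(g.extendTo𝕜' v : ℂ)‖ := RCLike.re_le_norm _


theorem cont_of_seminorm_bound {V : Type*} [AddCommGroup V] [Module ℂ V]
    [TopologicalSpace V] {ι : Type*} [Nonempty ι] (p : SeminormFamily ℂ V ι)
    (hp : WithSeminorms p) (ℓ : V →ₗ[ℂ] ℂ) (i : ι) (h : ∀ x, ‖ℓ x‖ ≤ p i x) :
    Continuous ℓ := by
  refine Seminorm.cont_withSeminorms_normedSpace ℂ hp ℓ ⟨{i}, 1, ?_⟩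
  intro x
  simpa [Finset.sup_singleton] using h x

theorem weak_dct {S : Type*} [MeasurableSpace S] (ρ : Measure S)
    {V : Type*} [AddCommGroup V] [Module ℂ V] [TopologicalSpace V]
    {ι : Type*} [Nonempty ι] (p : SeminormFamily ℂ V ι) (hp : WithSeminorms p)
    (f : ℕ → S → V) (g : S → V)
    (hmeas : ∀ n (ℓ : V →L[ℂ] ℂ), Measurable fun σ => ℓ (f n σ))
    (hconv : ∀ σ, Tendsto (fun n => f n σ) atTop (𝓝 (g σ)))
    (hdom : ∀ i, ∃ G : S → ℝ≥0∞, Measurable G ∧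
      (∀ᵐ σ ∂ρ, ∀ n, ENNReal.ofReal (p i (f n σ)) ≤ G σ) ∧ ∫⁻ σ, G σ ∂ρ < ∞)
    (ℓ : V →L[ℂ] ℂ) :
    Measurable (fun σ => ℓ (g σ)) ∧ Integrable (fun σ => ℓ (g σ)) ρ ∧
      Tendsto (fun n => ∫ σ, ℓ (f n σ) ∂ρ) atTop (𝓝 (∫ σ, ℓ (g σ) ∂ρ)) := by
  have hptconv : ∀ σ, Tendsto (fun n => ℓ (f n σ)) atTop (𝓝 (ℓ (g σ))) :=
    fun σ => (ℓ.continuous.tendsto _).comp (hconv σ)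
  have hgm : Measurable fun σ => ℓ (g σ) :=
    measurable_of_tendsto_metrizable (fun n => hmeas n ℓ) (tendsto_pi_nhds.2 hptconv)
  have hqc : Continuous ((normSeminorm ℂ ℂ).comp ℓ.toLinearMap) := by
    have : Continuous fun x => ‖ℓ x‖ := continuous_norm.comp ℓ.continuous
    exact this
  obtain ⟨s, C, hC0, hC⟩ :=
    Seminorm.bound_of_continuous hp ((normSeminorm ℂ ℂ).comp ℓ.toLinearMap) hqc
  choose G hGm hGb hGf using hdom
  have hsummeas : Measurable fun σ => ∑ i ∈ s, G i σ :=
    Finset.measurable_sum s fun i _ => hGm i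
  set B : S → ℝ≥0∞ := fun σ => (C : ℝ≥0∞) * ∑ i ∈ s, G i σ with hBdef
  have hBm : Measurable B := hsummeas.const_mul _
  have hBf : ∫⁻ σ, B σ ∂ρ < ∞ := by
    rw [hBdef]
    simp only
    rw [lintegral_const_mul _ hsummeas, lintegral_finset_sum s fun i _ => hGm i]
    exact ENNReal.mul_lt_top ENNReal.coe_lt_top (ENNReal.sum_lt_top.2 fun i hi => hGf i)
  set bound : S → ℝ := fun σ => (B σ).toReal with hbd
  have hbound_int : Integrable bound ρ :=
    integrable_toReal_of_lintegral_ne_top hBm.aemeasurable hBf.ne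
  have hae : ∀ᵐ σ ∂ρ, ∀ n, ‖ℓ (f n σ)‖ ≤ bound σ := by
    have h1 : ∀ᵐ σ ∂ρ, ∀ i ∈ s, ∀ n, ENNReal.ofReal (p i (f n σ)) ≤ G i σ :=
      (ae_ball_iff s.countable_toSet).2 fun i _ => hGb i
    filter_upwards [h1, ae_lt_top hBm hBf.ne] with σ hσ hBσ n
    have key : ENNReal.ofReal ‖ℓ (f n σ)‖ ≤ B σ := by
      have h2 : ‖ℓ (f n σ)‖ ≤ (C : ℝ) * (s.sup p) (f n σ) := by
        have := hC (f n σ)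
        simpa [Seminorm.smul_apply, NNReal.smul_def] using this
      have h3 : ENNReal.ofReal ‖ℓ (f n σ)‖ ≤
          (C : ℝ≥0∞) * ENNReal.ofReal ((s.sup p) (f n σ)) := by
        calc ENNReal.ofReal ‖ℓ (f n σ)‖ ≤ ENNReal.ofReal ((C : ℝ) * (s.sup p) (f n σ)) :=
              ENNReal.ofReal_le_ofReal h2
          _ = (C : ℝ≥0∞) * ENNReal.ofReal ((s.sup p) (f n σ)) := by
              rw [ENNReal.ofReal_mul C.coe_nonneg, ENNReal.ofReal_coe_nnreal]
      refine h3.trans (mul_le_mul_right ?_ _)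
      calc ENNReal.ofReal ((s.sup p) (f n σ))
          ≤ ENNReal.ofReal (∑ i ∈ s, p i (f n σ)) := by
            refine ENNReal.ofReal_le_ofReal ?_
            exact Seminorm.finset_sup_apply_le
              (Finset.sum_nonneg fun i _ => apply_nonneg _ _)
              (fun i hi => Finset.single_le_sum (fun j _ => apply_nonneg _ _) hi)
        _ = ∑ i ∈ s, ENNReal.ofReal (p i (f n σ)) :=
            ENNReal.ofReal_sum_of_nonneg fun i _ => apply_nonneg _ _
        _ ≤ ∑ i ∈ s, G i σ := Finset.sum_le_sum fun i hi => hσ i hi n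
    have := ENNReal.toReal_mono hBσ.ne key
    rwa [ENNReal.toReal_ofReal (norm_nonneg _)] at this
  have hgae : ∀ᵐ σ ∂ρ, ‖ℓ (g σ)‖ ≤ bound σ := by
    filter_upwards [hae] with σ hσ
    exact le_of_tendsto ((hptconv σ).norm) (Eventually.of_forall hσ)
  refine ⟨hgm, Integrable.mono' hbound_int hgm.aestronglyMeasurable hgae, ?_⟩
  exact tendsto_integral_of_dominated_convergence bound
    (fun n => (hmeas n ℓ).aestronglyMeasurable) hbound_int
    (fun n => hae.mono fun σ h => h n) (Eventually.of_forall hptconv)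


theorem weak_cauchy {S : Type*} [MeasurableSpace S] (ρ : Measure S)
    {V : Type*} [AddCommGroup V] [Module ℂ V] [TopologicalSpace V]
    {ι : Type*} [Nonempty ι] (p : SeminormFamily ℂ V ι) (hp : WithSeminorms p)
    (f : ℕ → S → V) (g : S → V)
    (hmeas : ∀ n (ℓ : V →L[ℂ] ℂ), Measurable fun σ => ℓ (f n σ))
    (hint : ∀ n (ℓ : V →L[ℂ] ℂ), Integrable (fun σ => ℓ (f n σ)) ρ)
    (hconv : ∀ σ, Tendsto (fun n => f n σ) atTop (𝓝 (g σ)))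
    (hdom : ∀ i, ∃ G : S → ℝ≥0∞, Measurable G ∧
      (∀ᵐ σ ∂ρ, ∀ n, ENNReal.ofReal (p i (f n σ)) ≤ G σ) ∧ ∫⁻ σ, G σ ∂ρ < ∞)
    (I : ℕ → V) (hI : ∀ n (ℓ : V →L[ℂ] ℂ), ℓ (I n) = ∫ σ, ℓ (f n σ) ∂ρ) :
    ∀ i : ι, ∀ ε : ℝ, 0 < ε → ∃ N : ℕ, ∀ m ≥ N, ∀ n ≥ N, p i (I m - I n) < ε := by
  haveI : IsTopologicalAddGroup V := hp.topologicalAddGroup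
  intro i ε hε
  obtain ⟨G, hGm, hGb, hGf⟩ := hdom i
  choose ℓ0 hle hge using fun mn : ℕ × ℕ => exists_dual_seminorm (p i) (I mn.1 - I mn.2)
  have hcont : ∀ mn, Continuous (ℓ0 mn) :=
    fun mn => cont_of_seminorm_bound p hp (ℓ0 mn) i (hle mn)
  set L : ℕ × ℕ → V →L[ℂ] ℂ := fun mn => ⟨ℓ0 mn, hcont mn⟩ with hLdef
  set Ψ : ℕ → ℕ → S → ℝ≥0∞ := fun m n σ =>
    ENNReal.ofReal ‖L (m, n) (f m σ) - L (m, n) (f n σ)‖ with hΨdef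
  set Φ : ℕ → S → ℝ≥0∞ := fun N σ => ⨆ m, ⨆ n, Ψ (N + m) (N + n) σ with hΦdef
  have hmeasΨ : ∀ m n, Measurable (Ψ m n) := fun m n =>
    ((hmeas m (L (m, n))).sub (hmeas n (L (m, n)))).norm.ennreal_ofReal
  have hmeasΦ : ∀ N, Measurable (Φ N) :=
    fun N => Measurable.iSup fun m => Measurable.iSup fun n => hmeasΨ _ _
  have hΨbd : ∀ᵐ σ ∂ρ, ∀ m n, Ψ m n σ ≤ 2 * G σ := by
    filter_upwards [hGb] with σ hσ m n
    calc Ψ m n σ ≤ ENNReal.ofReal (p i (f m σ) + p i (f n σ)) := by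
          refine ENNReal.ofReal_le_ofReal ?_
          calc ‖L (m, n) (f m σ) - L (m, n) (f n σ)‖
              ≤ ‖L (m, n) (f m σ)‖ + ‖L (m, n) (f n σ)‖ := norm_sub_le _ _
            _ ≤ p i (f m σ) + p i (f n σ) := add_le_add (hle (m, n) _) (hle (m, n) _)
      _ ≤ ENNReal.ofReal (p i (f m σ)) + ENNReal.ofReal (p i (f n σ)) :=
          ENNReal.ofReal_add_le
      _ ≤ G σ + G σ := add_le_add (hσ m) (hσ n)
      _ = 2 * G σ := (two_mul _).symm
  have hΦbd : ∀ N, Φ N ≤ᵐ[ρ] fun σ => 2 * G σ := by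
    intro N
    filter_upwards [hΨbd] with σ hσ
    exact iSup_le fun m => iSup_le fun n => hσ _ _
  have htend : ∀ σ, Tendsto (fun N => Φ N σ) atTop (𝓝 0) := by
    intro σ
    rw [ENNReal.tendsto_atTop_zero]
    intro ε' hε'
    obtain ⟨δ, hδpos, hδle⟩ : ∃ δ : ℝ, 0 < δ ∧ ENNReal.ofReal (2 * δ) ≤ ε' := by
      rcases eq_or_ne ε' ⊤ with rfl | hne
      · exact ⟨1, one_pos, le_top⟩
      · refine ⟨ε'.toReal / 2, div_pos (ENNReal.toReal_pos hε'.ne' hne) two_pos, ?_⟩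
        have h2 : 2 * (ε'.toReal / 2) = ε'.toReal := by ring
        rw [h2, ENNReal.ofReal_toReal hne]
    have hr : Tendsto (fun n => p i (f n σ - g σ)) atTop (𝓝 0) := by
      have h0 : Tendsto (fun n => f n σ - g σ) atTop (𝓝 0) := by
        have := (hconv σ).sub (tendsto_const_nhds (x := g σ))
        simpa using this
      have := ((hp.continuous_seminorm i).tendsto 0).comp h0
      simpa [Function.comp_def] using this
    obtain ⟨N, hN⟩ := (Metric.tendsto_atTop.1 hr) δ hδpos
    refine ⟨N, fun M hM => ?_⟩
    refine iSup_le fun m => iSup_le fun n => ?_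
    have hb : ∀ k, N ≤ k → p i (f k σ - g σ) < δ := by
      intro k hk
      have := hN k hk
      rwa [Real.dist_eq, sub_zero, abs_of_nonneg (apply_nonneg _ _)] at this
    have key : ‖L (M + m, M + n) (f (M + m) σ) - L (M + m, M + n) (f (M + n) σ)‖ ≤ 2 * δ := by
      have heq : L (M + m, M + n) (f (M + m) σ) - L (M + m, M + n) (f (M + n) σ) =
          L (M + m, M + n) (f (M + m) σ - g σ) - L (M + m, M + n) (f (M + n) σ - g σ) := by
        rw [map_sub, map_sub]; abel
      rw [heq]
      calc ‖L (M + m, M + n) (f (M + m) σ - g σ) - L (M + m, M + n) (f (M + n) σ - g σ)‖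
          ≤ ‖L (M + m, M + n) (f (M + m) σ - g σ)‖ + ‖L (M + m, M + n) (f (M + n) σ - g σ)‖ :=
            norm_sub_le _ _
        _ ≤ p i (f (M + m) σ - g σ) + p i (f (M + n) σ - g σ) :=
            add_le_add (hle _ _) (hle _ _)
        _ ≤ δ + δ := add_le_add
            (hb _ (le_trans hM (Nat.le_add_right M m))).le
            (hb _ (le_trans hM (Nat.le_add_right M n))).le
        _ = 2 * δ := (two_mul δ).symm
    calc Ψ (M + m) (M + n) σ ≤ ENNReal.ofReal (2 * δ) := ENNReal.ofReal_le_ofReal key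
      _ ≤ ε' := hδle
  have hfin2G : ∫⁻ σ, 2 * G σ ∂ρ ≠ ∞ := by
    rw [lintegral_const_mul _ hGm]
    exact (ENNReal.mul_lt_top (by norm_num) hGf).ne
  have hDCT : Tendsto (fun N => ∫⁻ σ, Φ N σ ∂ρ) atTop (𝓝 0) := by
    have := tendsto_lintegral_of_dominated_convergence (μ := ρ)
      (F := Φ) (f := fun _ => (0 : ℝ≥0∞)) (fun σ => 2 * G σ) hmeasΦ hΦbd hfin2G
      (Eventually.of_forall htend)
    simpa using this
  have hεpos : (0 : ℝ≥0∞) < ENNReal.ofReal ε := ENNReal.ofReal_pos.2 hε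
  obtain ⟨N, hN⟩ := (eventually_atTop.1 (hDCT.eventually_lt_const hεpos))
  refine ⟨N, fun m hm n hn => ?_⟩
  have hΨΦ : ∀ σ, Ψ m n σ ≤ Φ N σ := by
    intro σ
    have hm' : N + (m - N) = m := Nat.add_sub_cancel' hm
    have hn' : N + (n - N) = n := Nat.add_sub_cancel' hn
    calc Ψ m n σ = Ψ (N + (m - N)) (N + (n - N)) σ := by rw [hm', hn']
      _ ≤ Φ N σ := le_iSup_of_le (m - N) (le_iSup_of_le (n - N) le_rfl)
  have hlint : ∫⁻ σ, Ψ m n σ ∂ρ < ENNReal.ofReal ε :=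
    lt_of_le_of_lt (lintegral_mono hΨΦ) (hN N le_rfl)
  have hIsub : L (m, n) (I m) - L (m, n) (I n) =
      ∫ σ, (L (m, n) (f m σ) - L (m, n) (f n σ)) ∂ρ := by
    rw [hI m (L (m, n)), hI n (L (m, n)),
      integral_sub (hint m (L (m, n))) (hint n (L (m, n)))]
  calc p i (I m - I n) ≤ ‖L (m, n) (I m - I n)‖ := hge (m, n)
    _ = ‖L (m, n) (I m) - L (m, n) (I n)‖ := by rw [map_sub]
    _ = ‖∫ σ, (L (m, n) (f m σ) - L (m, n) (f n σ)) ∂ρ‖ := by rw [hIsub]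
    _ ≤ (∫⁻ σ, Ψ m n σ ∂ρ).toReal := norm_integral_le_lintegral_norm _
    _ < ε := (ENNReal.lt_ofReal_iff_toReal_lt
        (lt_of_le_of_lt (lintegral_mono hΨΦ) (hN N le_rfl)).ne_top).1 hlint


/-- dominated convergence for weak (Gel'fand–Pettis) integrals in a
sequentially complete Hausdorff locally convex space whose topology is generated by
a family `p` of seminorms. If the weakly integrable `f_n` converge pointwise to `f`
and for each seminorm the upper integral of `sup_n α(f_n)` is finite, then `f` is
weakly integrable and the weak integrals of `f_n` converge to that of `f`. -/
theorem weakIntegral_dominated_convergence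
    {S : Type*} [MeasurableSpace S] (ρ : Measure S)
    {V : Type*} [AddCommGroup V] [Module ℂ V] [TopologicalSpace V]
    [IsTopologicalAddGroup V] [ContinuousSMul ℂ V] [T2Space V]
    {ι : Type*} [Nonempty ι] (p : SeminormFamily ℂ V ι) (hp : WithSeminorms p)
    (hcomplete : ∀ u : ℕ → V,
      (∀ i : ι, ∀ ε : ℝ, 0 < ε → ∃ N : ℕ, ∀ m ≥ N, ∀ n ≥ N, p i (u m - u n) < ε) →
      ∃ v : V, Tendsto u atTop (𝓝 v))
    (f : ℕ → S → V) (g : S → V)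
    (hfint : ∀ n, WeaklyIntegrable ρ (f n))
    (hconv : ∀ σ, Tendsto (fun n => f n σ) atTop (𝓝 (g σ)))
    (hdom : ∀ i : ι,
      upperIntegral ρ (fun σ => ⨆ n, ENNReal.ofReal (p i (f n σ))) < ∞)
    (I : ℕ → V) (hI : ∀ n, ∀ ℓ : V →L[ℂ] ℂ, ℓ (I n) = ∫ σ, ℓ (f n σ) ∂ρ) :
    WeaklyIntegrable ρ g ∧
      ∃ J : V, (∀ ℓ : V →L[ℂ] ℂ, ℓ J = ∫ σ, ℓ (g σ) ∂ρ) ∧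
        Tendsto I atTop (𝓝 J) := by
  have hmeas : ∀ n (ℓ : V →L[ℂ] ℂ), Measurable fun σ => ℓ (f n σ) := fun n => (hfint n).1
  have hint : ∀ n (ℓ : V →L[ℂ] ℂ), Integrable (fun σ => ℓ (f n σ)) ρ := fun n => (hfint n).2.1
  have hdom' : ∀ i, ∃ G : S → ℝ≥0∞, Measurable G ∧
      (∀ᵐ σ ∂ρ, ∀ n, ENNReal.ofReal (p i (f n σ)) ≤ G σ) ∧ ∫⁻ σ, G σ ∂ρ < ∞ := by
    intro i
    have h := hdom i
    rw [upperIntegral] at h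
    simp only [iInf_lt_iff] at h
    obtain ⟨G, hGm, hGb, hGf⟩ := h
    exact ⟨G, hGm, hGb.mono fun σ hσ n =>
      le_trans (le_iSup (fun n => ENNReal.ofReal (p i (f n σ))) n) hσ, hGf⟩
  have hkey := fun ℓ : V →L[ℂ] ℂ => weak_dct ρ p hp f g hmeas hconv hdom' ℓ
  obtain ⟨J, hJten⟩ := hcomplete I (weak_cauchy ρ p hp f g hmeas hint hconv hdom' I hI)
  have hJrep : ∀ ℓ : V →L[ℂ] ℂ, ℓ J = ∫ σ, ℓ (g σ) ∂ρ := by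
    intro ℓ
    have h1 : Tendsto (fun n => ℓ (I n)) atTop (𝓝 (ℓ J)) := (ℓ.continuous.tendsto _).comp hJten
    have h2 : Tendsto (fun n => ℓ (I n)) atTop (𝓝 (∫ σ, ℓ (g σ) ∂ρ)) :=
      ((hkey ℓ).2.2).congr fun n => (hI n ℓ).symm
    exact tendsto_nhds_unique h1 h2
  refine ⟨⟨fun ℓ => (hkey ℓ).1, fun ℓ => (hkey ℓ).2.1, ?_⟩, J, hJrep, hJten⟩
  intro T hT
  have hdomT : ∀ i, ∃ G : S → ℝ≥0∞, Measurable G ∧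
      (∀ᵐ σ ∂(ρ.restrict T), ∀ n, ENNReal.ofReal (p i (f n σ)) ≤ G σ) ∧
      ∫⁻ σ, G σ ∂(ρ.restrict T) < ∞ := by
    intro i
    obtain ⟨G, hGm, hGb, hGf⟩ := hdom' i
    exact ⟨G, hGm, ae_restrict_of_ae hGb,
      lt_of_le_of_lt (lintegral_mono' Measure.restrict_le_self le_rfl) hGf⟩
  choose IT hIT using fun n => (hfint n).2.2 T hT
  obtain ⟨JT, hJTten⟩ := hcomplete IT (weak_cauchy (ρ.restrict T) p hp f g hmeas
    (fun n ℓ => (hint n ℓ).restrict) hconv hdomT IT fun n ℓ => hIT n ℓ)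
  refine ⟨JT, fun ℓ => ?_⟩
  have h1 : Tendsto (fun n => ℓ (IT n)) atTop (𝓝 (ℓ JT)) := (ℓ.continuous.tendsto _).comp hJTten
  have h2 := (weak_dct (ρ.restrict T) p hp f g hmeas hconv hdomT ℓ).2.2
  exact tendsto_nhds_unique h1 (h2.congr fun n => (hIT n ℓ).symm)


end
end

section
/- Existence of weak* integrals: let V be a Banach space and g : Σ → V* such that for every v ∈ V the scalar function σ ↦ g(σ)(v) is measurable and ρ-integrable. Then g is Gel'fand–Pettis integrable in the weak* topology on V*, and the operator norm of ∫_Σ g dρ is at most the lower integral of σ ↦ ‖g(σ)‖_{V*}. -/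
open MeasureTheory ENNReal
open scoped ENNReal NNReal

noncomputable section

/-- existence of weak* integrals. If `V` is a Banach space and
`g : S → V*` is such that `σ ↦ g(σ)(v)` is measurable and integrable for each
`v ∈ V`, then `g` is Gel'fand–Pettis integrable in the weak* topology, i.e., over
every measurable set `T` there is `I_T ∈ V*` with `I_T(v) = ∫_T g(σ)(v) dρ`;
moreover the norm of the integral over all of `S` is bounded by the lower
integral of `σ ↦ ‖g(σ)‖`. -/
theorem weakStarIntegral_exists
    {S : Type*} [MeasurableSpace S] (ρ : Measure S)
    {V : Type*} [NormedAddCommGroup V] [NormedSpace ℂ V] [CompleteSpace V]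
    (g : S → StrongDual ℂ V)
    (hmeas : ∀ v : V, Measurable fun σ => g σ v)
    (hint : ∀ v : V, Integrable (fun σ => g σ v) ρ) :
    (∀ T : Set S, MeasurableSet T →
      ∃ I : StrongDual ℂ V, ∀ v : V, I v = ∫ σ in T, g σ v ∂ρ) ∧
    ∀ I : StrongDual ℂ V, (∀ v : V, I v = ∫ σ, g σ v ∂ρ) →
      (‖I‖₊ : ℝ≥0∞) ≤ lowerIntegral ρ (fun σ => (‖g σ‖₊ : ℝ≥0∞)) := by
  classical
  -- the linear map into L¹
  let Φ : V →ₗ[ℂ] (Lp ℂ 1 ρ) :=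
    { toFun := fun v => (hint v).toL1 _
      map_add' := by
        intro v w
        have hfun : (fun σ => g σ (v + w)) = (fun σ => g σ v) + fun σ => g σ w := by
          funext σ; simp
        simp only [hfun]
        exact Integrable.toL1_add _ _ (hint v) (hint w)
      map_smul' := by
        intro c v
        have hfun : (fun σ => g σ (c • v)) = c • fun σ => g σ v := by
          funext σ; simp
        simp only [hfun, RingHom.id_apply]
        exact Integrable.toL1_smul _ (hint v) c }
  have hΦ : ∀ v : V, (Φ v : S → ℂ) =ᵐ[ρ] fun σ => g σ v := fun v =>
    Integrable.coeFn_toL1 (hint v)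
  -- continuity via the closed graph theorem
  have hΦcont : Continuous Φ := by
    apply Φ.continuous_of_seq_closed_graph
    intro u x y hux huy
    have hm : TendstoInMeasure ρ (fun n => (Φ (u n) : S → ℂ)) Filter.atTop (y : S → ℂ) :=
      tendstoInMeasure_of_tendsto_Lp huy
    obtain ⟨ns, hns_mono, hns⟩ := hm.exists_seq_tendsto_ae
    have hall : ∀ᵐ σ ∂ρ, ∀ n, (Φ (u n) : S → ℂ) σ = g σ (u n) :=
      ae_all_iff.mpr fun n => hΦ (u n)
    have hy : (y : S → ℂ) =ᵐ[ρ] fun σ => g σ x := by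
      filter_upwards [hns, hall] with σ h1 h2
      have h3 : Filter.Tendsto (fun k => g σ (u (ns k))) Filter.atTop (nhds ((y : S → ℂ) σ)) := by
        refine h1.congr fun k => ?_
        exact h2 (ns k)
      have h4 : Filter.Tendsto (fun k => g σ (u (ns k))) Filter.atTop (nhds (g σ x)) :=
        ((g σ).continuous.tendsto x).comp (hux.comp hns_mono.tendsto_atTop)
      exact tendsto_nhds_unique h3 h4
    exact Lp.ext (hy.trans (hΦ x).symm)
  let Φc : V →L[ℂ] (Lp ℂ 1 ρ) := ⟨Φ, hΦcont⟩
  have hΦnorm : ∀ v : V, ‖Φc v‖ = ∫ σ, ‖g σ v‖ ∂ρ := by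
    intro v
    show ‖(hint v).toL1 _‖ = _
    rw [Integrable.norm_toL1_eq_lintegral_norm]
    simp_rw [ofReal_norm]
    rw [← ofReal_integral_norm_eq_lintegral_enorm (hint v),
      ENNReal.toReal_ofReal (by positivity)]
  constructor
  · -- existence over every measurable set
    intro T hT
    have hintT : ∀ v : V, Integrable (fun σ => g σ v) (ρ.restrict T) := fun v =>
      (hint v).restrict
    let J : V →ₗ[ℂ] ℂ :=
      { toFun := fun v => ∫ σ in T, g σ v ∂ρ
        map_add' := by
          intro v w
          simp only [map_add]
          exact integral_add (hintT v) (hintT w)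
        map_smul' := by
          intro c v
          simp only [_root_.map_smul, RingHom.id_apply, smul_eq_mul]
          rw [← smul_eq_mul, ← integral_smul]
          simp [smul_eq_mul]
        }
    have hJb : ∀ v : V, ‖J v‖ ≤ ‖Φc‖ * ‖v‖ := by
      intro v
      calc ‖∫ σ in T, g σ v ∂ρ‖ ≤ ∫ σ in T, ‖g σ v‖ ∂ρ := norm_integral_le_integral_norm _
        _ ≤ ∫ σ, ‖g σ v‖ ∂ρ :=
          setIntegral_le_integral (hint v).norm (.of_forall fun _ => norm_nonneg _)
        _ = ‖Φc v‖ := (hΦnorm v).symm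
        _ ≤ ‖Φc‖ * ‖v‖ := Φc.le_opNorm v
    exact ⟨J.mkContinuous ‖Φc‖ hJb, fun v => rfl⟩
  · -- the norm bound
    intro I hI
    by_cases hLtop : lowerIntegral ρ (fun σ => (‖g σ‖₊ : ℝ≥0∞)) = ∞
    · rw [hLtop]; exact le_top
    set L := lowerIntegral ρ (fun σ => (‖g σ‖₊ : ℝ≥0∞)) with hLdef
    have key : ∀ v : V, (‖I v‖₊ : ℝ≥0∞) ≤ L * ‖v‖₊ := by
      intro v
      rcases eq_or_ne v 0 with rfl | hv
      · simp
      have hv' : (‖v‖₊ : ℝ≥0∞) ≠ 0 := by simpa using hv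
      have hv'' : (‖v‖₊ : ℝ≥0∞) ≠ ∞ := coe_ne_top
      have hmin : ∀ σ, (‖g σ v‖₊ : ℝ≥0∞) * (‖v‖₊ : ℝ≥0∞)⁻¹ ≤ (‖g σ‖₊ : ℝ≥0∞) := by
        intro σ
        rw [← div_eq_mul_inv]
        refine ENNReal.div_le_of_le_mul ?_
        exact_mod_cast (g σ).le_opNNNorm v
      have hminm : Measurable fun σ => (‖g σ v‖₊ : ℝ≥0∞) * (‖v‖₊ : ℝ≥0∞)⁻¹ :=
        (hmeas v).enorm.mul_const _
      have h1 : (∫⁻ σ, (‖g σ v‖₊ : ℝ≥0∞) ∂ρ) * (‖v‖₊ : ℝ≥0∞)⁻¹ ≤ L := by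
        rw [← lintegral_mul_const _ (show Measurable fun σ => (‖g σ v‖₊ : ℝ≥0∞) from (hmeas v).enorm)]
        exact le_iSup_of_le _ (le_iSup_of_le hminm
          (le_iSup_of_le (Filter.Eventually.of_forall hmin) le_rfl))
      have h2 : (∫⁻ σ, (‖g σ v‖₊ : ℝ≥0∞) ∂ρ) ≤ L * ‖v‖₊ := by
        rw [← div_eq_mul_inv] at h1
        exact (ENNReal.div_le_iff hv' hv'').mp h1 |>.trans (by rw [mul_comm])
      calc (‖I v‖₊ : ℝ≥0∞) = (‖∫ σ, g σ v ∂ρ‖₊ : ℝ≥0∞) := by rw [hI v]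
        _ ≤ ∫⁻ σ, (‖g σ v‖₊ : ℝ≥0∞) ∂ρ := enorm_integral_le_lintegral_enorm _
        _ ≤ L * ‖v‖₊ := h2
    have hnorm : ‖I‖ ≤ L.toReal := by
      refine I.opNorm_le_bound ENNReal.toReal_nonneg fun v => ?_
      have h := key v
      rw [← ENNReal.coe_toNNReal hLtop, ← ENNReal.coe_mul, ENNReal.coe_le_coe] at h
      calc ‖I v‖ = ((‖I v‖₊ : ℝ≥0) : ℝ) := rfl
        _ ≤ ((L.toNNReal * ‖v‖₊ : ℝ≥0) : ℝ) := by exact_mod_cast h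
        _ = L.toReal * ‖v‖ := by push_cast; rfl
    rw [← ENNReal.coe_toNNReal hLtop]
    rw [ENNReal.coe_le_coe, ← NNReal.coe_le_coe]
    exact hnorm

end
end

section
/- If V is a reflexive Banach space, f : Σ → V is weakly measurable (ℓ∘f measurable for all ℓ ∈ V*), and ∫_Σ |ℓ∘f| dρ < ∞ for all ℓ ∈ V*, then f is Gel'fand–Pettis integrable: for every measurable set S there exists v_S ∈ V with ℓ(v_S) = ∫_S ℓ∘f dρ for all ℓ ∈ V*. -/
open MeasureTheory Filter Topology

noncomputable section

/-- if `V` is a reflexive Banach space (the canonical embedding into the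
double dual is surjective), `f : S → V` is weakly measurable, and `ℓ ∘ f` is
integrable for every continuous linear functional `ℓ`, then `f` is Gel'fand–Pettis
integrable: over every measurable set `T` there is `v_T ∈ V` with
`ℓ(v_T) = ∫_T ℓ(f σ) dρ` for all `ℓ`. -/
theorem weakIntegral_exists_of_reflexive
    {S : Type*} [MeasurableSpace S] (ρ : Measure S)
    {V : Type*} [NormedAddCommGroup V] [NormedSpace ℂ V] [CompleteSpace V]
    (hrefl : Function.Surjective (NormedSpace.inclusionInDoubleDual ℂ V))
    (f : S → V)
    (hmeas : ∀ ℓ : StrongDual ℂ V, Measurable fun σ => ℓ (f σ))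
    (hint : ∀ ℓ : StrongDual ℂ V, Integrable (fun σ => ℓ (f σ)) ρ) :
    ∀ T : Set S, MeasurableSet T →
      ∃ v : V, ∀ ℓ : StrongDual ℂ V, ℓ v = ∫ σ in T, ℓ (f σ) ∂ρ := by
  intro T hT
  set μ : Measure S := ρ.restrict T with hμ
  have hintμ : ∀ ℓ : StrongDual ℂ V, Integrable (fun σ => ℓ (f σ)) μ :=
    fun ℓ => (hint ℓ).restrict
  -- the linear map `ℓ ↦ ℓ ∘ f` into `L¹(μ)`
  let g : StrongDual ℂ V →ₗ[ℂ] (Lp ℂ 1 μ) :=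
    { toFun := fun ℓ => (hintμ ℓ).toL1 _
      map_add' := fun ℓ ℓ' => Integrable.toL1_add _ _ (hintμ ℓ) (hintμ ℓ')
      map_smul' := fun c ℓ => Integrable.toL1_smul _ (hintμ ℓ) c }
  -- `g` has sequentially closed graph, hence is continuous (closed graph theorem)
  have hclosed : ∀ (u : ℕ → StrongDual ℂ V) (x : StrongDual ℂ V) (y : Lp ℂ 1 μ),
      Tendsto u atTop (𝓝 x) → Tendsto (⇑g ∘ u) atTop (𝓝 y) → y = g x := by
    intro u x y hu hgu
    have hmeas' : TendstoInMeasure μ (fun n => (g (u n) : S → ℂ)) atTop (y : S → ℂ) :=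
      tendstoInMeasure_of_tendsto_Lp hgu
    obtain ⟨ns, hns_mono, hns⟩ := hmeas'.exists_seq_tendsto_ae
    have hcoe : ∀ᵐ σ ∂μ, ∀ k : ℕ, (g (u (ns k)) : S → ℂ) σ = (u (ns k)) (f σ) :=
      ae_all_iff.mpr fun k => (hintμ (u (ns k))).coeFn_toL1
    have hpt : ∀ σ : S, Tendsto (fun k => (u (ns k)) (f σ)) atTop (𝓝 (x (f σ))) := by
      intro σ
      have hc : Continuous fun ℓ : StrongDual ℂ V => ℓ (f σ) :=
        (ContinuousLinearMap.apply ℂ ℂ (f σ)).continuous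
      exact ((hc.tendsto x).comp hu).comp hns_mono.tendsto_atTop
    have hae : (fun σ => x (f σ)) =ᵐ[μ] (y : S → ℂ) := by
      filter_upwards [hns, hcoe] with σ h1 h2
      have h3 : Tendsto (fun k => (u (ns k)) (f σ)) atTop (𝓝 ((y : S → ℂ) σ)) := by
        refine h1.congr fun k => h2 k
      exact tendsto_nhds_unique (hpt σ) h3
    have : g x = y := by
      rw [show g x = (hintμ x).toL1 _ from rfl, ← (L1.integrable_coeFn y).toL1_coeFn]
      exact (Integrable.toL1_eq_toL1_iff _ _ _ _).mpr hae
    exact this.symm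
  let G : StrongDual ℂ V →L[ℂ] (Lp ℂ 1 μ) := ContinuousLinearMap.ofSeqClosedGraph hclosed
  -- the Gel'fand integral as an element of the double dual
  have hGapp : ∀ ℓ, G ℓ = (hintμ ℓ).toL1 _ := fun ℓ => rfl
  let Λlin : StrongDual ℂ V →ₗ[ℂ] ℂ :=
    { toFun := fun ℓ => ∫ σ, ℓ (f σ) ∂μ
      map_add' := fun ℓ ℓ' => by
        simpa [ContinuousLinearMap.add_apply] using
          integral_add (hintμ ℓ) (hintμ ℓ')
      map_smul' := fun c ℓ => by
        simpa [ContinuousLinearMap.smul_apply] using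
          integral_smul c (fun σ => ℓ (f σ)) (μ := μ) }
  have hΛeq : ∀ ℓ, Λlin ℓ = L1.integral (G ℓ) := by
    intro ℓ
    rw [hGapp, L1.integral_eq_integral]
    exact (integral_congr_ae (hintμ ℓ).coeFn_toL1).symm
  have hΛcont : Continuous ⇑Λlin := by
    have h : ⇑Λlin = (fun y : Lp ℂ 1 μ => L1.integral y) ∘ ⇑G := funext hΛeq
    have h2 : (fun y : Lp ℂ 1 μ => L1.integral y) = ⇑(L1.integralCLM (μ := μ) (E := ℂ)) :=
      funext fun y => MeasureTheory.L1.integral_eq y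
    rw [h, h2]
    exact L1.integralCLM.continuous.comp G.continuous
  obtain ⟨v, hv⟩ := hrefl ⟨Λlin, hΛcont⟩
  refine ⟨v, fun ℓ => ?_⟩
  have : NormedSpace.inclusionInDoubleDual ℂ V v ℓ = Λlin ℓ := by rw [hv]; rfl
  rw [NormedSpace.dual_def] at this
  exact this

end
end
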